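/- arXiv:1208.4818 — 3 statements merged into one kernel-verified Lean document; each statement's English description precedes it below -/
import Mathlib

section
/- Multiplying the MJP path density p(s₀,S,T) = π₀(s₀)(∏_{i=1}^n A_{s_i s_{i-1}}) exp(-∫_{t_start}^{t_end} |A_{S(t)}| dt) by the inhomogeneous-Poisson density of the auxiliary virtual jumps p(U_T | s₀,S,T) = (∏_{i=0}^n (Ω + A_{s_i s_i})^{|U_i|}) exp(-∫ (Ω + A_{S(t) S(t)}) dt) yields exactly the uniformized density p(v₀,V,W) = e^{-Ω(t_end - t_start)} π₀(v₀) ∏_{i=1}^{|V|} (Ω + A_{v_i v_i})^{1(v_i = v_{i-1})} A_{v_i v_{i-1}}^{1(v_i ≠ v_{i-1})}, whenever (v₀,V,W) is the compatible augmentation of (s₀,S,T) by U. -/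
open Matrix

/-- Multiplying the MJP path density
`π₀(s₀) (∏ᵢ A_{sᵢ sᵢ₋₁}) exp(-∑ᵢ |A_{sᵢsᵢ}| τᵢ)` (with holding times `τᵢ`, so that the exponent
is `-∫ |A_{S(t)}| dt`) by the inhomogeneous-Poisson density of the virtual jumps
`(∏ᵢ (Ω + A_{sᵢsᵢ})^{|Uᵢ|}) exp(-∑ᵢ (Ω + A_{sᵢsᵢ}) τᵢ)` yields exactly the uniformized density
`e^{-Ω(t_end - t_start)} π₀(s₀) ∏ᵢ (Ω + A_{sᵢsᵢ})^{|Uᵢ|} ∏ᵢ A_{sᵢ sᵢ₋₁}`: the value of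
`p(v₀,V,W)` at the compatible augmentation `(v₀,V,W)` of `(s₀,S,T)` by `U`, in which self-jumps
in the `i`-th holding interval each contribute `Ω + A_{sᵢsᵢ}` and real jumps contribute
`A_{sᵢ sᵢ₋₁}`. -/
theorem mjp_times_virtual_jump_density_eq_uniformized (N : ℕ)
    (A : Matrix (Fin N) (Fin N) ℝ) (Ω : ℝ)
    (hdiag : ∀ s, A s s ≤ 0) (hΩ : ∀ s, |A s s| ≤ Ω)
    (π₀ : Fin N → ℝ) (n : ℕ) (s : Fin (n + 1) → Fin N)
    (τ : Fin (n + 1) → ℝ) (hτ : ∀ i, 0 ≤ τ i)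
    (tstart tend : ℝ) (hsum : ∑ i, τ i = tend - tstart)
    (u : Fin (n + 1) → ℕ) :
    (π₀ (s 0) * (∏ i : Fin n, A (s i.succ) (s i.castSucc)) *
        Real.exp (-∑ i, |A (s i) (s i)| * τ i)) *
      ((∏ i, (Ω + A (s i) (s i)) ^ u i) *
        Real.exp (-∑ i, (Ω + A (s i) (s i)) * τ i))
      = Real.exp (-Ω * (tend - tstart)) * π₀ (s 0) *
          (∏ i, (Ω + A (s i) (s i)) ^ u i) *
          ∏ i : Fin n, A (s i.succ) (s i.castSucc) := by
  have habs : ∀ i, |A (s i) (s i)| = -A (s i) (s i) := fun i => abs_of_nonpos (hdiag _)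
  have hexp : Real.exp (-∑ i, |A (s i) (s i)| * τ i) *
      Real.exp (-∑ i, (Ω + A (s i) (s i)) * τ i) = Real.exp (-Ω * (tend - tstart)) := by
    rw [← Real.exp_add]
    congr 1
    rw [← hsum, ← neg_add, ← Finset.sum_add_distrib, Finset.mul_sum, neg_eq_iff_eq_neg,
      ← Finset.sum_neg_distrib]
    refine Finset.sum_congr rfl fun i _ => ?_
    rw [habs i]; ring
  calc _ = π₀ (s 0) * (∏ i : Fin n, A (s i.succ) (s i.castSucc)) *
        (∏ i, (Ω + A (s i) (s i)) ^ u i) *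
        (Real.exp (-∑ i, |A (s i) (s i)| * τ i) *
          Real.exp (-∑ i, (Ω + A (s i) (s i)) * τ i)) := by ring
    _ = _ := by rw [hexp]; ring
end

section
/- Marginalizing self-transitions recovers the MJP density: for a fixed jump skeleton (s₀,S,T) with n jumps and holding interval lengths τ_0,…,τ_n, summing the uniformized density p(v₀,V,W) over all numbers and positions of self-transitions (integrating each |U_i| ≥ 0 virtual jump times over the i-th interval with density (Ω + A_{s_i s_i})^{|U_i|} τ_i^{|U_i|}/|U_i|! pattern) yields π₀(s₀)(∏_{i=1}^n A_{s_i s_{i-1}}) exp(-∑_{i=0}^n |A_{s_i s_i}| τ_i). -/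
open Matrix

set_option maxHeartbeats 1000000 in
lemma hasSum_pi_prod (m : ℕ) (f : Fin m → ℕ → ℝ) (hf : ∀ i k, 0 ≤ f i k)
    (hs : ∀ i, Summable (f i)) :
    HasSum (fun u : Fin m → ℕ => ∏ i, f i (u i)) (∏ i, ∑' k, f i k) := by
  induction m with
  | zero =>
      simpa using hasSum_unique (f := fun u : Fin 0 → ℕ => ∏ i, f i (u i))
  | succ m ih =>
      have ih' := ih (fun i => f i.succ) (fun i k => hf i.succ k) (fun i => hs i.succ)
      have h0 := (hs 0).hasSum
      have hsummable : Summable fun x : ℕ × (Fin m → ℕ) =>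
          f 0 x.1 * ∏ i, f i.succ (x.2 i) :=
 by
        apply Summable.mul_of_nonneg (hs 0) ih'.summable
        · exact Pi.le_def.mpr fun k => hf 0 k
        · exact Pi.le_def.mpr fun u => Finset.prod_nonneg fun i _ => hf i.succ (u i)
      have hmul := h0.mul ih' hsummable
      have := (Fin.consEquiv (fun _ : Fin (m + 1) => ℕ)).symm.hasSum_iff.mpr hmul
      have heq : ((fun x : ℕ × (Fin m → ℕ) => f 0 x.1 * ∏ i, f i.succ (x.2 i)) ∘
          (Fin.consEquiv (fun _ : Fin (m + 1) => ℕ)).symm) = fun u : Fin (m + 1) → ℕ => ∏ i, f i (u i) := by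
        funext u
        simp [Fin.prod_univ_succ, Fin.tail]
      rw [heq] at this
      rw [Fin.prod_univ_succ]
      exact this

/-- Marginalizing self-transitions recovers the MJP density: for a fixed jump skeleton with
states `sᵢ` and holding interval lengths `τᵢ`, summing the uniformized density over the numbers
`uᵢ` of virtual jumps in each interval -- each placement of `uᵢ` unordered virtual jumps in an
interval of length `τᵢ` having integrated density `((Ω + A_{sᵢsᵢ}) τᵢ)^{uᵢ}/uᵢ!` -- yields
`π₀(s₀) (∏ᵢ A_{sᵢ sᵢ₋₁}) exp(-∑ᵢ |A_{sᵢsᵢ}| τᵢ)`. -/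
theorem marginalizing_virtual_jumps (N : ℕ)
    (A : Matrix (Fin N) (Fin N) ℝ) (Ω : ℝ)
    (hdiag : ∀ s, A s s ≤ 0) (hΩ : ∀ s, |A s s| ≤ Ω)
    (π₀ : Fin N → ℝ) (n : ℕ) (s : Fin (n + 1) → Fin N)
    (τ : Fin (n + 1) → ℝ) (hτ : ∀ i, 0 ≤ τ i)
    (tstart tend : ℝ) (hsum : ∑ i, τ i = tend - tstart) :
    ∑' u : Fin (n + 1) → ℕ,
        (Real.exp (-Ω * (tend - tstart)) * π₀ (s 0) *
          (∏ i : Fin n, A (s i.succ) (s i.castSucc)) *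
          ∏ i, ((Ω + A (s i) (s i)) * τ i) ^ u i / (u i).factorial)
      = π₀ (s 0) * (∏ i : Fin n, A (s i.succ) (s i.castSucc)) *
          Real.exp (-∑ i, |A (s i) (s i)| * τ i) := by
  have hexp : ∀ t : ℝ, ∑' k : ℕ, t ^ k / (k.factorial : ℝ) = Real.exp t := by
    intro t
    rw [Real.exp_eq_exp_ℝ, NormedSpace.exp_eq_tsum_div]
  have hx : ∀ i : Fin (n + 1), 0 ≤ (Ω + A (s i) (s i)) * τ i := by
    intro i
    have : -A (s i) (s i) ≤ Ω := (neg_le_abs _).trans (hΩ (s i))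
    have h1 : 0 ≤ Ω + A (s i) (s i) := by linarith
    exact mul_nonneg h1 (hτ i)
  set x : Fin (n + 1) → ℝ := fun i => (Ω + A (s i) (s i)) * τ i with hxdef
  have key : HasSum (fun u : Fin (n + 1) → ℕ => ∏ i, x i ^ u i / (u i).factorial)
      (Real.exp (∑ i, x i)) := by
    have h := hasSum_pi_prod (n + 1) (fun i k => x i ^ k / k.factorial)
      (fun i k => div_nonneg (pow_nonneg (hx i) k) (by positivity))
      (fun i => Real.summable_pow_div_factorial (x i))
    have heq : (∏ i, ∑' k : ℕ, x i ^ k / (k.factorial : ℝ)) = Real.exp (∑ i, x i) := by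
      rw [Real.exp_sum]
      exact Finset.prod_congr rfl fun i _ => hexp (x i)
    rwa [heq] at h
  rw [tsum_mul_left, key.tsum_eq]
  have h1 : ∑ i, x i = Ω * (tend - tstart) + ∑ i, A (s i) (s i) * τ i := by
    rw [← hsum, Finset.mul_sum, ← Finset.sum_add_distrib]
    exact Finset.sum_congr rfl fun i _ => by simp only [hxdef]; ring
  have h2 : ∑ i, |A (s i) (s i)| * τ i = ∑ i, -(A (s i) (s i) * τ i) :=
    Finset.sum_congr rfl fun i _ => by rw [abs_of_nonpos (hdiag (s i))]; ring
  have hE : Real.exp (∑ i, x i) * Real.exp (-Ω * (tend - tstart)) =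
      Real.exp (-∑ i, |A (s i) (s i)| * τ i) := by
    rw [← Real.exp_add]
    congr 1
    rw [h1, h2, Finset.sum_neg_distrib]
    ring
  linear_combination π₀ (s 0) * (∏ i : Fin n, A (s i.succ) (s i.castSucc)) * hE
end

section
/- Backward sampling correctness: in a hidden Markov model, the conditional probability satisfies P(S_t = s | S_{t+1} = s', O^0,…,O^T) ∝ α^t(s) B^t_{s's} L^t(s), where α^t is the forward filtering vector; hence sampling S_T ∝ L^T(s)α^T(s) and then S_t backwards via this kernel yields an exact sample from the joint posterior P(S_0,…,S_T | O^0,…,O^T). -/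
private lemma hmm_snoc_sum {N t : ℕ} (G : (Fin (t + 2) → Fin N) → ℝ) :
    ∑ f : Fin (t + 2) → Fin N, G f
      = ∑ s : Fin N, ∑ f : Fin (t + 1) → Fin N, G (Fin.snoc f s) := by
  calc ∑ f : Fin (t + 2) → Fin N, G f
      = ∑ p : Fin N × (Fin (t + 1) → Fin N), G (Fin.snoc p.2 p.1) :=
        (Fintype.sum_bijective (fun p : (Fin N) × (Fin (t+1) → Fin N) =>
            (Fin.snoc p.2 p.1 : Fin (t + 2) → Fin N))
          (Function.bijective_iff_has_inverse.2 ⟨fun f => (f (Fin.last _), Fin.init f),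
            fun p => by simp [Fin.init_snoc], fun f => by simp [Fin.snoc_init_self]⟩)
          _ G (fun p => rfl)).symm
    _ = ∑ s : Fin N, ∑ f : Fin (t + 1) → Fin N, G (Fin.snoc f s) := by exact Fintype.sum_prod_type _

private lemma hmm_snoc_zero {N t : ℕ} (f : Fin (t + 1) → Fin N) (s : Fin N) :
    (Fin.snoc f s : Fin (t + 2) → Fin N) 0 = f 0 := by
  rw [← Fin.castSucc_zero, Fin.snoc_castSucc]

private lemma hmm_forwardA {N : ℕ} (π₀ : Fin N → ℝ) (B : ℕ → Matrix (Fin N) (Fin N) ℝ)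
    (L : ℕ → Fin N → ℝ) (α : ℕ → Fin N → ℝ)
    (hα0 : ∀ s, α 0 s = π₀ s)
    (hrec : ∀ t s', α (t + 1) s' = ∑ s, α t s * L t s * B t s' s) :
    ∀ (t : ℕ) (g : Fin N → ℝ),
      ∑ f : Fin (t + 1) → Fin N,
        (π₀ (f 0) * (∏ j : Fin t, B j (f j.succ) (f j.castSucc)) *
          ∏ j : Fin t, L j (f j.castSucc)) * g (f (Fin.last t))
      = ∑ s, α t s * g s := by
  intro t
  induction t with
  | zero =>
    intro g
    rw [Fintype.sum_equiv (Equiv.funUnique (Fin 1) (Fin N)) _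
      (fun s => α 0 s * g s) (fun f => ?_)]
    simp [hα0, Fin.last]
  | succ t ih =>
    intro g
    rw [hmm_snoc_sum]
    have key : ∀ s'' : Fin N,
        (∑ f : Fin (t + 1) → Fin N,
          (π₀ ((Fin.snoc f s'' : Fin (t + 2) → Fin N) 0) *
            (∏ j : Fin (t+1), B j ((Fin.snoc f s'' : Fin (t + 2) → Fin N) j.succ)
              ((Fin.snoc f s'' : Fin (t + 2) → Fin N) j.castSucc)) *
            ∏ j : Fin (t+1), L j ((Fin.snoc f s'' : Fin (t + 2) → Fin N) j.castSucc)) *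
              g ((Fin.snoc f s'' : Fin (t + 2) → Fin N) (Fin.last (t+1))))
          = α (t + 1) s'' * g s'' := by
      intro s''
      have e1 : ∀ f : Fin (t + 1) → Fin N,
          (π₀ ((Fin.snoc f s'' : Fin (t + 2) → Fin N) 0) *
            (∏ j : Fin (t+1), B j ((Fin.snoc f s'' : Fin (t + 2) → Fin N) j.succ)
              ((Fin.snoc f s'' : Fin (t + 2) → Fin N) j.castSucc)) *
            ∏ j : Fin (t+1), L j ((Fin.snoc f s'' : Fin (t + 2) → Fin N) j.castSucc)) *
              g ((Fin.snoc f s'' : Fin (t + 2) → Fin N) (Fin.last (t+1)))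
          = (π₀ (f 0) * (∏ j : Fin t, B j (f j.succ) (f j.castSucc)) *
              ∏ j : Fin t, L j (f j.castSucc)) *
            (B t s'' (f (Fin.last t)) * L t (f (Fin.last t)) * g s'') := by
        intro f
        rw [Fin.prod_univ_castSucc
            (f := fun j : Fin (t+1) => B j ((Fin.snoc f s'' : Fin (t + 2) → Fin N) j.succ)
              ((Fin.snoc f s'' : Fin (t + 2) → Fin N) j.castSucc)),
          Fin.prod_univ_castSucc
            (f := fun j : Fin (t+1) => L j ((Fin.snoc f s'' : Fin (t + 2) → Fin N) j.castSucc))]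
        simp only [hmm_snoc_zero, Fin.succ_castSucc, Fin.snoc_castSucc, Fin.succ_last,
          Fin.snoc_last, Fin.coe_castSucc, Fin.val_last]
        ring
      rw [Finset.sum_congr rfl (fun f _ => e1 f),
        ih (fun x => B t s'' x * L t x * g s''), hrec]
      rw [Finset.sum_mul]
      exact Finset.sum_congr rfl (fun s _ => by ring)
    rw [Finset.sum_congr rfl (fun s'' _ => key s'')]

private lemma hmm_backC {N : ℕ} (π₀ : Fin N → ℝ) (B : ℕ → Matrix (Fin N) (Fin N) ℝ)
    (L : ℕ → Fin N → ℝ) (α : ℕ → Fin N → ℝ)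
    (hα0 : ∀ s, α 0 s = π₀ s)
    (hrec : ∀ t s', α (t + 1) s' = ∑ s, α t s * L t s * B t s' s) :
    ∀ (T : ℕ) (g : Fin N → ℝ) (i : Fin T), ∃ γ : Fin N → ℝ, ∀ s s' : Fin N,
      (∑ f : Fin (T + 1) → Fin N,
        if f i.castSucc = s ∧ f i.succ = s' then
          (π₀ (f 0) * (∏ j : Fin T, B j (f j.succ) (f j.castSucc)) *
            ∏ t : Fin (T + 1), L t (f t)) * g (f (Fin.last T))
        else 0)
      = α i s * L i s * B i s' s * γ s' := by
  intro T
  induction T with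
  | zero => intro g i; exact absurd i.2 (by omega)
  | succ T ih =>
    intro g i
    induction i using Fin.lastCases with
    | cast i' =>
      obtain ⟨γ, hγ⟩ := ih (fun x => ∑ s'' : Fin N, B T s'' x * L (T + 1) s'' * g s'') i'
      refine ⟨γ, fun s s' => ?_⟩
      rw [hmm_snoc_sum, Finset.sum_comm]
      have key : ∀ f : Fin (T + 1) → Fin N,
          (∑ s'' : Fin N,
            if (Fin.snoc f s'' : Fin (T + 2) → Fin N) (Fin.castSucc i').castSucc = s ∧
                (Fin.snoc f s'' : Fin (T + 2) → Fin N) (Fin.castSucc i').succ = s' then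
              (π₀ ((Fin.snoc f s'' : Fin (T + 2) → Fin N) 0) *
                (∏ j : Fin (T + 1), B j ((Fin.snoc f s'' : Fin (T + 2) → Fin N) j.succ)
                  ((Fin.snoc f s'' : Fin (T + 2) → Fin N) j.castSucc)) *
                ∏ t : Fin (T + 2), L t ((Fin.snoc f s'' : Fin (T + 2) → Fin N) t)) *
                g ((Fin.snoc f s'' : Fin (T + 2) → Fin N) (Fin.last (T + 1)))
            else 0)
          = if f i'.castSucc = s ∧ f i'.succ = s' then
              (π₀ (f 0) * (∏ j : Fin T, B j (f j.succ) (f j.castSucc)) *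
                ∏ t : Fin (T + 1), L t (f t)) *
                (∑ s'' : Fin N, B T s'' (f (Fin.last T)) * L (T + 1) s'' * g s'')
            else 0 := by
        intro f
        have e2 : ∀ s'' : Fin N,
            (π₀ ((Fin.snoc f s'' : Fin (T + 2) → Fin N) 0) *
                (∏ j : Fin (T + 1), B j ((Fin.snoc f s'' : Fin (T + 2) → Fin N) j.succ)
                  ((Fin.snoc f s'' : Fin (T + 2) → Fin N) j.castSucc)) *
                ∏ t : Fin (T + 2), L t ((Fin.snoc f s'' : Fin (T + 2) → Fin N) t)) *
                g ((Fin.snoc f s'' : Fin (T + 2) → Fin N) (Fin.last (T + 1)))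
            = (π₀ (f 0) * (∏ j : Fin T, B j (f j.succ) (f j.castSucc)) *
                ∏ t : Fin (T + 1), L t (f t)) *
                (B T s'' (f (Fin.last T)) * L (T + 1) s'' * g s'') := by
          intro s''
          rw [Fin.prod_univ_castSucc
              (f := fun j : Fin (T + 1) => B j ((Fin.snoc f s'' : Fin (T + 2) → Fin N) j.succ)
                ((Fin.snoc f s'' : Fin (T + 2) → Fin N) j.castSucc)),
            Fin.prod_univ_castSucc
              (f := fun t : Fin (T + 2) => L t ((Fin.snoc f s'' : Fin (T + 2) → Fin N) t))]
          simp only [hmm_snoc_zero, Fin.succ_castSucc, Fin.snoc_castSucc, Fin.succ_last,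
            Fin.snoc_last, Fin.coe_castSucc, Fin.val_last]
          ring
        have hcond : ∀ s'' : Fin N,
            ((Fin.snoc f s'' : Fin (T + 2) → Fin N) (Fin.castSucc i').castSucc = s ∧
              (Fin.snoc f s'' : Fin (T + 2) → Fin N) (Fin.castSucc i').succ = s')
            ↔ (f i'.castSucc = s ∧ f i'.succ = s') := by
          intro s''
          rw [Fin.succ_castSucc, Fin.snoc_castSucc, Fin.snoc_castSucc]
        calc (∑ s'' : Fin N,
            if (Fin.snoc f s'' : Fin (T + 2) → Fin N) (Fin.castSucc i').castSucc = s ∧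
                (Fin.snoc f s'' : Fin (T + 2) → Fin N) (Fin.castSucc i').succ = s' then
              (π₀ ((Fin.snoc f s'' : Fin (T + 2) → Fin N) 0) *
                (∏ j : Fin (T + 1), B j ((Fin.snoc f s'' : Fin (T + 2) → Fin N) j.succ)
                  ((Fin.snoc f s'' : Fin (T + 2) → Fin N) j.castSucc)) *
                ∏ t : Fin (T + 2), L t ((Fin.snoc f s'' : Fin (T + 2) → Fin N) t)) *
                g ((Fin.snoc f s'' : Fin (T + 2) → Fin N) (Fin.last (T + 1)))
            else 0)
            = ∑ s'' : Fin N,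
              if f i'.castSucc = s ∧ f i'.succ = s' then
                (π₀ (f 0) * (∏ j : Fin T, B j (f j.succ) (f j.castSucc)) *
                  ∏ t : Fin (T + 1), L t (f t)) *
                  (B T s'' (f (Fin.last T)) * L (T + 1) s'' * g s'')
              else 0 :=
              Finset.sum_congr rfl (fun s'' _ => if_congr (hcond s'') (e2 s'') rfl)
          _ = _ := by
              split_ifs with h
              · rw [Finset.mul_sum]
              · simp
      rw [Finset.sum_congr rfl (fun f _ => key f), hγ s s', Fin.coe_castSucc]
    | last =>
      refine ⟨fun s' => L (T + 1) s' * g s', fun s s' => ?_⟩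
      rw [hmm_snoc_sum, Finset.sum_comm]
      have key : ∀ f : Fin (T + 1) → Fin N,
          (∑ s'' : Fin N,
            if (Fin.snoc f s'' : Fin (T + 2) → Fin N) (Fin.last T).castSucc = s ∧
                (Fin.snoc f s'' : Fin (T + 2) → Fin N) (Fin.last T).succ = s' then
              (π₀ ((Fin.snoc f s'' : Fin (T + 2) → Fin N) 0) *
                (∏ j : Fin (T + 1), B j ((Fin.snoc f s'' : Fin (T + 2) → Fin N) j.succ)
                  ((Fin.snoc f s'' : Fin (T + 2) → Fin N) j.castSucc)) *
                ∏ t : Fin (T + 2), L t ((Fin.snoc f s'' : Fin (T + 2) → Fin N) t)) *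
                g ((Fin.snoc f s'' : Fin (T + 2) → Fin N) (Fin.last (T + 1)))
            else 0)
          = (π₀ (f 0) * (∏ j : Fin T, B j (f j.succ) (f j.castSucc)) *
              ∏ j : Fin T, L j (f j.castSucc)) *
            (if f (Fin.last T) = s then
              L T (f (Fin.last T)) * B T s' (f (Fin.last T)) * (L (T + 1) s' * g s') else 0) := by
        intro f
        have e2 : ∀ s'' : Fin N,
            (π₀ ((Fin.snoc f s'' : Fin (T + 2) → Fin N) 0) *
                (∏ j : Fin (T + 1), B j ((Fin.snoc f s'' : Fin (T + 2) → Fin N) j.succ)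
                  ((Fin.snoc f s'' : Fin (T + 2) → Fin N) j.castSucc)) *
                ∏ t : Fin (T + 2), L t ((Fin.snoc f s'' : Fin (T + 2) → Fin N) t)) *
                g ((Fin.snoc f s'' : Fin (T + 2) → Fin N) (Fin.last (T + 1)))
            = (π₀ (f 0) * (∏ j : Fin T, B j (f j.succ) (f j.castSucc)) *
                ∏ j : Fin T, L j (f j.castSucc)) *
                (L T (f (Fin.last T)) * B T s'' (f (Fin.last T)) * (L (T + 1) s'' * g s'')) := by
          intro s''
          rw [Fin.prod_univ_castSucc
              (f := fun j : Fin (T + 1) => B j ((Fin.snoc f s'' : Fin (T + 2) → Fin N) j.succ)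
                ((Fin.snoc f s'' : Fin (T + 2) → Fin N) j.castSucc)),
            Fin.prod_univ_castSucc
              (f := fun t : Fin (T + 2) => L t ((Fin.snoc f s'' : Fin (T + 2) → Fin N) t))]
          simp only [hmm_snoc_zero, Fin.succ_castSucc, Fin.snoc_castSucc, Fin.succ_last,
            Fin.snoc_last, Fin.coe_castSucc, Fin.val_last]
          rw [Fin.prod_univ_castSucc (f := fun t : Fin (T + 1) => L t (f t))]
          simp only [Fin.coe_castSucc, Fin.val_last]
          ring
        have hcond : ∀ s'' : Fin N,
            ((Fin.snoc f s'' : Fin (T + 2) → Fin N) (Fin.last T).castSucc = s ∧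
              (Fin.snoc f s'' : Fin (T + 2) → Fin N) (Fin.last T).succ = s')
            ↔ (f (Fin.last T) = s ∧ s'' = s') := by
          intro s''
          rw [Fin.succ_last, Fin.snoc_castSucc, Fin.snoc_last]
        calc (∑ s'' : Fin N,
            if (Fin.snoc f s'' : Fin (T + 2) → Fin N) (Fin.last T).castSucc = s ∧
                (Fin.snoc f s'' : Fin (T + 2) → Fin N) (Fin.last T).succ = s' then
              (π₀ ((Fin.snoc f s'' : Fin (T + 2) → Fin N) 0) *
                (∏ j : Fin (T + 1), B j ((Fin.snoc f s'' : Fin (T + 2) → Fin N) j.succ)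
                  ((Fin.snoc f s'' : Fin (T + 2) → Fin N) j.castSucc)) *
                ∏ t : Fin (T + 2), L t ((Fin.snoc f s'' : Fin (T + 2) → Fin N) t)) *
                g ((Fin.snoc f s'' : Fin (T + 2) → Fin N) (Fin.last (T + 1)))
            else 0)
            = ∑ s'' : Fin N,
              if s'' = s' then
                (if f (Fin.last T) = s then
                  (π₀ (f 0) * (∏ j : Fin T, B j (f j.succ) (f j.castSucc)) *
                    ∏ j : Fin T, L j (f j.castSucc)) *
                    (L T (f (Fin.last T)) * B T s'' (f (Fin.last T)) * (L (T + 1) s'' * g s''))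
                 else 0)
              else 0 := by
              refine Finset.sum_congr rfl (fun s'' _ => ?_)
              rw [show (if (Fin.snoc f s'' : Fin (T + 2) → Fin N) (Fin.last T).castSucc = s ∧
                  (Fin.snoc f s'' : Fin (T + 2) → Fin N) (Fin.last T).succ = s' then
                    (π₀ ((Fin.snoc f s'' : Fin (T + 2) → Fin N) 0) *
                      (∏ j : Fin (T + 1), B j ((Fin.snoc f s'' : Fin (T + 2) → Fin N) j.succ)
                        ((Fin.snoc f s'' : Fin (T + 2) → Fin N) j.castSucc)) *
                      ∏ t : Fin (T + 2), L t ((Fin.snoc f s'' : Fin (T + 2) → Fin N) t)) *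
                      g ((Fin.snoc f s'' : Fin (T + 2) → Fin N) (Fin.last (T + 1)))
                  else 0)
                = if f (Fin.last T) = s ∧ s'' = s' then
                    (π₀ (f 0) * (∏ j : Fin T, B j (f j.succ) (f j.castSucc)) *
                      ∏ j : Fin T, L j (f j.castSucc)) *
                      (L T (f (Fin.last T)) * B T s'' (f (Fin.last T)) * (L (T + 1) s'' * g s''))
                  else 0 from if_congr (hcond s'') (e2 s'') rfl]
              split_ifs with h1 h2 h3 h4 <;> first | rfl | tauto
          _ = _ := by
              rw [Finset.sum_ite_eq' Finset.univ s'
                (fun s'' => if f (Fin.last T) = s then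
                  (π₀ (f 0) * (∏ j : Fin T, B j (f j.succ) (f j.castSucc)) *
                    ∏ j : Fin T, L j (f j.castSucc)) *
                    (L T (f (Fin.last T)) * B T s'' (f (Fin.last T)) * (L (T + 1) s'' * g s''))
                 else 0)]
              simp only [Finset.mem_univ, if_true]
              split_ifs with h
              · rfl
              · simp
      rw [Finset.sum_congr rfl (fun f _ => key f),
        hmm_forwardA π₀ B L α hα0 hrec T
          (fun x => if x = s then L T x * B T s' x * (L (T + 1) s' * g s') else 0)]
      simp only [mul_ite, mul_zero]
      rw [Finset.sum_ite_eq' Finset.univ s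
        (fun x => α T x * (L T x * B T s' x * (L (T + 1) s' * g s')))]
      simp only [Finset.mem_univ, if_true, Fin.val_last]
      ring

private lemma hmm_alpha_pos {N : ℕ} (π₀ : Fin N → ℝ) (B : ℕ → Matrix (Fin N) (Fin N) ℝ)
    (L : ℕ → Fin N → ℝ) (α : ℕ → Fin N → ℝ)
    (hα0 : ∀ s, α 0 s = π₀ s)
    (hrec : ∀ t s', α (t + 1) s' = ∑ s, α t s * L t s * B t s' s)
    (hπ : ∀ s, 0 < π₀ s) (hB : ∀ t s s', 0 < B t s' s) (hL : ∀ t s, 0 < L t s)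
    (hN : 0 < N) : ∀ t s, 0 < α t s := by
  intro t
  induction t with
  | zero => intro s; rw [hα0]; exact hπ s
  | succ t ih =>
    intro s'
    rw [hrec]
    refine Finset.sum_pos (fun s _ => ?_) (Finset.univ_nonempty_iff.2 ?_)
    · exact mul_pos (mul_pos (ih s) (hL t s)) (hB t s s')
    · exact Fin.pos_iff_nonempty.mp hN

/-- Backward sampling correctness for HMMs. With joint weight
`w(f) = π₀(f₀) ∏ᵢ B i (f_{i+1}) (f_i) ∏_t L t (f_t)` (the probability of the hidden path `f`
together with all observations `O⁰,…,O^T`), and forward vectors `α` as in forward filtering: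
(1) for each `t < T`, `P(S_t = s, S_{t+1} = s', O⁰,…,O^T) = α t s · L t s · B t s' s · γ(s')`
for some `γ` not depending on `s`, so `P(S_t = s | S_{t+1} = s', O) ∝ α t s · B t s' s · L t s`;
(2) sampling `S_T ∝ L T s · α T s` and then each `S_t` backwards via this normalized kernel
yields exactly the joint posterior `w(f)/∑_g w(g)`. -/
theorem hmm_backward_sampling (N T : ℕ) (π₀ : Fin N → ℝ)
    (B : ℕ → Matrix (Fin N) (Fin N) ℝ) (L : ℕ → Fin N → ℝ)
    (α : ℕ → Fin N → ℝ)
    (hα0 : ∀ s, α 0 s = π₀ s)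
    (hrec : ∀ t s', α (t + 1) s' = ∑ s, α t s * L t s * B t s' s)
    (hπ : ∀ s, 0 < π₀ s) (hB : ∀ t s s', 0 < B t s' s) (hL : ∀ t s, 0 < L t s) :
    (∀ i : Fin T, ∃ γ : Fin N → ℝ, ∀ s s' : Fin N,
        (∑ f : Fin (T + 1) → Fin N,
          if f i.castSucc = s ∧ f i.succ = s' then
            π₀ (f 0) * (∏ j : Fin T, B j (f j.succ) (f j.castSucc)) *
              ∏ t : Fin (T + 1), L t (f t)
          else 0)
        = α i s * L i s * B i s' s * γ s') ∧
    (∀ f : Fin (T + 1) → Fin N,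
        (L T (f (Fin.last T)) * α T (f (Fin.last T)) / ∑ s, L T s * α T s) *
          ∏ i : Fin T,
            (α i (f i.castSucc) * B i (f i.succ) (f i.castSucc) * L i (f i.castSucc) /
              ∑ s, α i s * B i (f i.succ) s * L i s)
        = (π₀ (f 0) * (∏ j : Fin T, B j (f j.succ) (f j.castSucc)) *
            ∏ t : Fin (T + 1), L t (f t)) /
          ∑ g : Fin (T + 1) → Fin N,
            π₀ (g 0) * (∏ j : Fin T, B j (g j.succ) (g j.castSucc)) *
              ∏ t : Fin (T + 1), L t (g t)) := by
  rcases Nat.eq_zero_or_pos N with hN | hN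
  · subst hN
    exact ⟨fun i => ⟨Fin.elim0, fun s => s.elim0⟩, fun f => (f 0).elim0⟩
  have hαpos := hmm_alpha_pos π₀ B L α hα0 hrec hπ hB hL hN
  constructor
  · intro i
    obtain ⟨γ, hγ⟩ := hmm_backC π₀ B L α hα0 hrec T (fun _ => 1) i
    refine ⟨γ, fun s s' => ?_⟩
    rw [← hγ s s']
    exact Finset.sum_congr rfl fun f _ => by split_ifs <;> simp
  · intro f
    have hZ : (∑ g : Fin (T + 1) → Fin N,
        π₀ (g 0) * (∏ j : Fin T, B j (g j.succ) (g j.castSucc)) *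
          ∏ t : Fin (T + 1), L t (g t)) = ∑ s, α T s * L T s := by
      rw [← hmm_forwardA π₀ B L α hα0 hrec T (fun x => L T x)]
      refine Finset.sum_congr rfl fun g _ => ?_
      rw [Fin.prod_univ_castSucc (f := fun t : Fin (T + 1) => L t (g t))]
      simp only [Fin.coe_castSucc, Fin.val_last]
      ring
    have hZ2 : (∑ s, L T s * α T s) = ∑ s, α T s * L T s :=
      Finset.sum_congr rfl fun s _ => mul_comm _ _
    have hden : ∀ i : Fin T,
        (∑ s, α i s * B i (f i.succ) s * L i s) = α (↑i + 1) (f i.succ) := by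
      intro i
      rw [hrec]
      exact Finset.sum_congr rfl fun s _ => by ring
    have hprod : (∏ i : Fin T,
        (α i (f i.castSucc) * B i (f i.succ) (f i.castSucc) * L i (f i.castSucc) /
          ∑ s, α i s * B i (f i.succ) s * L i s))
        = ((∏ i : Fin T, α i (f i.castSucc)) * (∏ i : Fin T, B i (f i.succ) (f i.castSucc)) *
            ∏ i : Fin T, L i (f i.castSucc)) / ∏ i : Fin T, α (↑i + 1) (f i.succ) := by
      rw [Finset.prod_congr rfl (fun i _ => by rw [hden i]), Finset.prod_div_distrib,
        Finset.prod_mul_distrib, Finset.prod_mul_distrib]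
    have hkey : (∏ i : Fin T, α i (f i.castSucc)) * α T (f (Fin.last T))
        = α 0 (f 0) * ∏ i : Fin T, α (↑i + 1) (f i.succ) := by
      have h1 := Fin.prod_univ_castSucc (f := fun i : Fin (T + 1) => α i (f i))
      have h2 := Fin.prod_univ_succ (f := fun i : Fin (T + 1) => α i (f i))
      simp only [Fin.coe_castSucc, Fin.val_succ, Fin.val_last, Fin.val_zero] at h1 h2
      rw [← h1, h2]
    have hZpos : (0:ℝ) < ∑ s, α T s * L T s :=
      Finset.sum_pos (fun s _ => mul_pos (hαpos T s) (hL T s))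
        (Finset.univ_nonempty_iff.2 (Fin.pos_iff_nonempty.mp hN))
    have hDpos : (0:ℝ) < ∏ i : Fin T, α (↑i + 1) (f i.succ) :=
      Finset.prod_pos fun i _ => hαpos _ _
    rw [hprod, hZ, hZ2, div_mul_div_comm,
      Fin.prod_univ_castSucc (f := fun t : Fin (T + 1) => L t (f t))]
    simp only [Fin.coe_castSucc, Fin.val_last]
    rw [div_eq_div_iff (by positivity) (ne_of_gt hZpos),
      show π₀ (f 0) = α 0 (f 0) from (hα0 _).symm]
    linear_combination (L T (f (Fin.last T)) * (∏ i : Fin T, B i (f i.succ) (f i.castSucc)) *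
      (∏ i : Fin T, L i (f i.castSucc)) * ∑ s, α T s * L T s) * hkey
end
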